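/- In Construction 1, the local distance satisfies d_{1,x} = r_x − δ_x + 1; i.e., any pattern of at most r_x − δ_x erasures in the local codeword c_x = [m_x, m_x A_{x,x} + y_x U_x] is uniquely correctable given knowledge of the code structure (y_x ∈ F^{δ_x} arbitrary and unknown): if [m, m A_{x,x} + y U_x] and [m', m' A_{x,x} + y' U_x] agree on at least n_x − (r_x − δ_x) coordinates, then they are equal. -/

import Mathlib

open Polynomial Finset

lemma cauchy_kernel {F : Type*} [Field F] [DecidableEq F] {ι : Type*} [DecidableEq ι]
    (S : Finset ι) (a : ι → F) (v : ι → F) (T : Finset F)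
    (hcard : S.card ≤ T.card) (hinj : Set.InjOn a S)
    (hne : ∀ i ∈ S, ∀ t ∈ T, a i ≠ t)
    (hsum : ∀ t ∈ T, ∑ i ∈ S, v i * (a i - t)⁻¹ = 0) :
    ∀ i ∈ S, v i = 0 := by
  rcases S.eq_empty_or_nonempty with rfl | hS
  · simp
  set P : F[X] := ∑ i ∈ S, C (v i) * ∏ l ∈ S.erase i, (C (a l) - X) with hP
  have hdeg : P.natDegree < T.card := by
    have : P.natDegree ≤ S.card - 1 := by
      apply Polynomial.natDegree_sum_le_of_forall_le
      intro i hi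
      calc (C (v i) * ∏ l ∈ S.erase i, (C (a l) - X)).natDegree
          ≤ (C (v i)).natDegree + (∏ l ∈ S.erase i, (C (a l) - X)).natDegree :=
            natDegree_mul_le
        _ ≤ 0 + ∑ l ∈ S.erase i, (C (a l) - X).natDegree := by
            gcongr
            · simp
            · exact natDegree_prod_le _ _
        _ ≤ ∑ l ∈ S.erase i, 1 := by
            simp only [zero_add]
            apply Finset.sum_le_sum
            intro l _
            calc (C (a l) - X).natDegree ≤ max (C (a l)).natDegree X.natDegree :=
              natDegree_sub_le _ _
              _ ≤ 1 := by simp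
        _ = (S.erase i).card := by simp
        _ ≤ S.card - 1 := by
            rw [Finset.card_erase_of_mem hi]
    have h1 : 1 ≤ S.card := hS.card_pos
    omega
  have hPt : ∀ t ∈ T, P.eval t = 0 := by
    intro t ht
    have hne' : ∀ i ∈ S, a i - t ≠ 0 := fun i hi => sub_ne_zero_of_ne (hne i hi t ht)
    have := hsum t ht
    have key : P.eval t = (∏ l ∈ S, (a l - t)) * ∑ i ∈ S, v i * (a i - t)⁻¹ := by
      rw [Finset.mul_sum, hP, eval_finset_sum]
      apply Finset.sum_congr rfl
      intro i hi
      rw [eval_mul, eval_C, eval_prod]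
      simp only [eval_sub, eval_C, eval_X]
      rw [← Finset.mul_prod_erase S _ hi]
      field_simp
      rw [eq_div_iff (hne' i hi)]
    rw [key, this, mul_zero]
  have hP0 : P = 0 := Polynomial.eq_zero_of_natDegree_lt_card_of_eval_eq_zero' P T hPt hdeg
  intro i hi
  have heval : P.eval (a i) = v i * ∏ l ∈ S.erase i, (a l - a i) := by
    rw [hP, eval_finset_sum]
    rw [Finset.sum_eq_single i]
    · simp [eval_prod]
    · intro j hj hji
      rw [eval_mul, eval_prod,
        Finset.prod_eq_zero (Finset.mem_erase.mpr ⟨fun h => hji h.symm, hi⟩) (by simp)]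
      ring
    · intro h; exact absurd hi h
  have hprod : ∏ l ∈ S.erase i, (a l - a i) ≠ 0 := by
    apply Finset.prod_ne_zero_iff.mpr
    intro l hl
    rcases Finset.mem_erase.mp hl with ⟨hli, hlS⟩
    exact sub_ne_zero_of_ne fun h => hli (hinj hlS hi h)
  rw [hP0, eval_zero] at heval
  rcases mul_eq_zero.mp heval.symm with h | h
  · exact h
  · exact absurd h hprod

/-- Construction 1, local distance `d_{1,x} = r_x - δ_x + 1`: any pattern of at
most `r_x - δ_x` erasures in the local codeword `c_x = [m, mA + yU]` is
uniquely correctable (for unknown `y`). -/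
theorem construction1_local_distance {F : Type*} [Field F] [DecidableEq F]
    (k r δ : ℕ) (hδr : δ < r)
    (a : Fin (k + δ) → F) (b : Fin r → F)
    (ha : Function.Injective a) (hb : Function.Injective b)
    (hab : ∀ i j, a i ≠ b j)
    (A : Matrix (Fin k) (Fin r) F) (U : Matrix (Fin δ) (Fin r) F)
    (hA : ∀ i j, A i j = (a (Fin.castAdd δ i) - b j)⁻¹)
    (hU : ∀ i j, U i j = (a (Fin.natAdd k i) - b j)⁻¹)
    (m m' : Fin k → F) (y y' : Fin δ → F)
    (hagree : (Finset.univ.filter (fun z : Fin k ⊕ Fin r =>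
        Sum.elim m (Matrix.vecMul m A + Matrix.vecMul y U) z ≠
        Sum.elim m' (Matrix.vecMul m' A + Matrix.vecMul y' U) z)).card ≤ r - δ) :
    Sum.elim m (Matrix.vecMul m A + Matrix.vecMul y U) =
      Sum.elim m' (Matrix.vecMul m' A + Matrix.vecMul y' U) := by
  classical
  set d : Fin k → F := fun i => m i - m' i with hd
  set e : Fin δ → F := fun i => y i - y' i with he
  set S : Finset (Fin k) := Finset.univ.filter (fun i => d i ≠ 0) with hSdef
  set Tbad : Finset (Fin r) := Finset.univ.filter (fun j =>
      (Matrix.vecMul m A + Matrix.vecMul y U) j ≠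
      (Matrix.vecMul m' A + Matrix.vecMul y' U) j) with hTdef
  -- split the agreement count
  have hsplit : S.card + Tbad.card ≤ r - δ := by
    have : (Finset.univ.filter (fun z : Fin k ⊕ Fin r =>
        Sum.elim m (Matrix.vecMul m A + Matrix.vecMul y U) z ≠
        Sum.elim m' (Matrix.vecMul m' A + Matrix.vecMul y' U) z)) =
        (S.disjSum Tbad) := by
      ext z
      cases z with
      | inl i =>
          simp [hSdef, hd, sub_ne_zero]
      | inr j =>
          simp [hTdef]
    rw [this, Finset.card_disjSum] at hagree
    exact hagree
  -- good columns
  set G : Finset (Fin r) := Finset.univ.filter (fun j => j ∉ Tbad) with hGdef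
  have hGcard : G.card = r - Tbad.card := by
    have hGc : G = Tbadᶜ := by ext j; simp [hGdef]
    rw [hGc, Finset.card_compl]
    simp
  -- the combined vector and its support
  set vv : Fin k ⊕ Fin δ → F := Sum.elim d e with hvv
  set aa : Fin k ⊕ Fin δ → F := fun z => a (finSumFinEquiv z) with haa
  set S' : Finset (Fin k ⊕ Fin δ) := S.disjSum Finset.univ with hS'
  set T : Finset F := G.image b with hT
  have hTcard : T.card = G.card := Finset.card_image_of_injective _ hb
  have hcard : S'.card ≤ T.card := by
    rw [hTcard, hGcard, hS', Finset.card_disjSum]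
    simp only [Finset.card_univ, Fintype.card_fin]
    omega
  have hinj : Set.InjOn aa ↑S' := fun x _ z _ h =>
    finSumFinEquiv.injective (ha h)
  have hne : ∀ i ∈ S', ∀ t ∈ T, aa i ≠ t := by
    intro i _ t ht
    rcases Finset.mem_image.mp ht with ⟨j, _, rfl⟩
    exact hab _ j
  have hsum : ∀ t ∈ T, ∑ i ∈ S', vv i * (aa i - t)⁻¹ = 0 := by
    intro t ht
    rcases Finset.mem_image.mp ht with ⟨j, hj, rfl⟩
    have hjgood : (Matrix.vecMul m A + Matrix.vecMul y U) j =
        (Matrix.vecMul m' A + Matrix.vecMul y' U) j := by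
      have := (Finset.mem_filter.mp (hGdef ▸ hj)).2
      by_contra hc
      exact this (Finset.mem_filter.mpr ⟨Finset.mem_univ _, hc⟩)
    rw [hS', Finset.sum_disjSum]
    have h1 : ∑ i ∈ S, vv (Sum.inl i) * (aa (Sum.inl i) - b j)⁻¹ =
        ∑ i : Fin k, d i * A i j := by
      rw [← Finset.sum_subset (Finset.subset_univ S) (fun x _ hx => by
        have hx0 : d x = 0 := by simpa [hSdef] using hx
        simp [hvv, hx0])]
      refine Finset.sum_congr rfl fun i _ => ?_
      rw [hA]
      simp [hvv, haa]
    have h2 : ∑ i : Fin δ, vv (Sum.inr i) * (aa (Sum.inr i) - b j)⁻¹ =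
        ∑ i : Fin δ, e i * U i j := by
      refine Finset.sum_congr rfl fun i _ => ?_
      rw [hU]
      simp [hvv, haa]
    rw [h1, h2]
    have h3 : ∑ i, d i * A i j = Matrix.vecMul m A j - Matrix.vecMul m' A j := by
      simp [Matrix.vecMul, dotProduct, hd, sub_mul, Finset.sum_sub_distrib]
    have h4 : ∑ i, e i * U i j = Matrix.vecMul y U j - Matrix.vecMul y' U j := by
      simp [Matrix.vecMul, dotProduct, he, sub_mul, Finset.sum_sub_distrib]
    have h5 := hjgood
    simp only [Pi.add_apply] at h5
    rw [h3, h4]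
    linear_combination h5
  have hzero := cauchy_kernel S' aa vv T hcard hinj hne hsum
  -- d = 0 and e = 0
  have hdz : ∀ i, d i = 0 := by
    intro i
    by_contra hi
    have hiS : Sum.inl i ∈ S' := by
      rw [hS']; exact Finset.inl_mem_disjSum.mpr (Finset.mem_filter.mpr ⟨Finset.mem_univ _, hi⟩)
    exact hi (hzero _ hiS)
  have hez : ∀ i, e i = 0 := by
    intro i
    have h := hzero (Sum.inr i)
      (by rw [hS']; exact Finset.inr_mem_disjSum.mpr (Finset.mem_univ _))
    simpa [hvv] using h
  have hm : m = m' := funext fun i => sub_eq_zero.mp (hdz i)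
  have hy : y = y' := funext fun i => sub_eq_zero.mp (hez i)
  rw [hm, hy]
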